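/- In the relative greedy analysis, OPT ≤ TMST·(1 − ∫_0^{1/2} ρ(γ) dγ), where ρ(γ) = (1/TMST)·Σ_{i ≤ j(γ)} drop_{G_i}(X_i), j(γ) is the last index i with c(K_i)/drop_{G_i}(X_i) < 1 − γ, and OPT is the cost of an optimal Steiner tree. -/

import Mathlib

open scoped Classical

/-- The minimum cost of a spanning tree of the complete graph on `R`
with respect to the edge costs `u`. -/
noncomputable def mstCost {R : Type*} (u : Sym2 R → ℝ) : ℝ :=
  sInf {w : ℝ | ∃ T : Finset (Sym2 R), (∀ e ∈ T, ¬ e.IsDiag) ∧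
    (SimpleGraph.fromEdgeSet (↑T : Set (Sym2 R))).Connected ∧
    T.card + 1 = Nat.card R ∧ w = ∑ e ∈ T, u e}
/-- Shortest-path distance in the weighted graph `(G, c)`, as a function on unordered pairs. -/
noncomputable def wdist {V : Type*} (G : SimpleGraph V) (c : Sym2 V → ℝ) : Sym2 V → ℝ :=
  Sym2.lift ⟨fun x y => sInf {d : ℝ |
      (∃ p : G.Walk x y, d = (p.edges.map c).sum) ∨
      (∃ p : G.Walk y x, d = (p.edges.map c).sum)},
    fun x y => congrArg sInf (Set.ext fun _ => or_comm)⟩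

/-- The metric closure of `(G, c)` restricted to a terminal set `R`. -/
noncomputable def restrictDist {V : Type*} (G : SimpleGraph V) (c : Sym2 V → ℝ)
    (R : Finset V) : Sym2 {v : V // v ∈ R} → ℝ :=
  Sym2.lift ⟨fun a b => wdist G c s((a : V), (b : V)), fun a b => by show wdist G c s((a : V), (b : V)) = wdist G c s((b : V), (a : V)); rw [Sym2.eq_swap]⟩
/-- The setoid on `R` identifying all elements of `X` (and nothing else). -/
def contractSetoid {R : Type*} (X : Set R) : Setoid R where
  r a b := a = b ∨ (a ∈ X ∧ b ∈ X)
  iseqv := ⟨fun _ => Or.inl rfl,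
    fun h => h.elim (fun e => Or.inl e.symm) (fun h' => Or.inr ⟨h'.2, h'.1⟩),
    fun h1 h2 => by
      rcases h1 with rfl | ⟨ha, hb⟩
      · exact h2
      · rcases h2 with rfl | ⟨_, hc⟩
        · exact Or.inr ⟨ha, hb⟩
        · exact Or.inr ⟨ha, hc⟩⟩

/-- Edge costs on the quotient of `R` by a setoid `sd`: the minimum of `d`
over all pairs of representatives. -/
noncomputable def quotCost {R : Type*} (d : Sym2 R → ℝ) (sd : Setoid R) :
    Sym2 (Quotient sd) → ℝ :=
  fun e => sInf {v : ℝ | ∃ a b : R,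
    s(Quotient.mk sd a, Quotient.mk sd b) = e ∧ v = d s(a, b)}

/-- `drop(X) = TMST - TMST_{/X}` for the terminal metric `d`. -/
noncomputable def dropCost {R : Type*} (d : Sym2 R → ℝ) (X : Set R) : ℝ :=
  mstCost d - mstCost (quotCost d (contractSetoid X))
/-- The edge set `K` connects the vertex set `X`: all of `X` lies in a single
connected component of the graph with edge set `K`. -/
def ConnectsSet {V : Type*} (K : Set (Sym2 V)) (X : Set V) : Prop :=
  ∀ x ∈ X, ∀ y ∈ X, (SimpleGraph.fromEdgeSet K).Reachable x y

/-- The minimum cost of a component (edge set of `G`) connecting the vertex set `X`. -/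
noncomputable def connCost {V : Type*} (G : SimpleGraph V) (c : Sym2 V → ℝ)
    (X : Set V) : ℝ :=
  sInf {w : ℝ | ∃ K : Finset (Sym2 V), (↑K : Set (Sym2 V)) ⊆ G.edgeSet ∧
    ConnectsSet (↑K : Set (Sym2 V)) X ∧ w = ∑ e ∈ K, c e}
/-- The drop of a terminal set `Y` at a stage of the greedy process: the decrease in
terminal MST cost caused by additionally contracting `Y`, in the instance where the
terminals have already been contracted according to the setoid `sd`. -/
noncomputable def stageDrop {V : Type*} (G : SimpleGraph V) (c : Sym2 V → ℝ)
    (R : Finset V) (sd : Setoid {v : V // v ∈ R}) (Y : Set {v : V // v ∈ R}) : ℝ :=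
  mstCost (quotCost (restrictDist G c R) sd)
    - mstCost (quotCost (restrictDist G c R) (sd ⊔ contractSetoid Y))

/-- The efficiency ratio `c(K) / drop(Y)` of a component `K` for a terminal set `Y`
at the stage given by the setoid `sd`. -/
noncomputable def stageRatio {V : Type*} (G : SimpleGraph V) (c : Sym2 V → ℝ)
    (R : Finset V) (sd : Setoid {v : V // v ∈ R}) (K : Finset (Sym2 V))
    (Y : Set {v : V // v ∈ R}) : ℝ :=
  (∑ e ∈ K, c e) / stageDrop G c R sd Y

section Aux

open SimpleGraph

variable {V : Type*}

/-- Sums over walk edges are nonnegative. -/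
lemma walk_sum_nonneg {G : SimpleGraph V} (c : Sym2 V → ℝ)
    (hc : ∀ e ∈ G.edgeSet, 0 ≤ c e) {x y : V} (p : G.Walk x y) :
    0 ≤ (p.edges.map c).sum := by
  apply List.sum_nonneg
  intro a ha
  rcases List.mem_map.1 ha with ⟨e, he, rfl⟩
  exact hc e (p.edges_subset_edgeSet he)

lemma wdist_nonneg {G : SimpleGraph V} (c : Sym2 V → ℝ)
    (hc : ∀ e ∈ G.edgeSet, 0 ≤ c e) (p : Sym2 V) : 0 ≤ wdist G c p := by
  induction p using Sym2.ind with
  | _ x y =>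
    rw [wdist, Sym2.lift_mk]
    apply Real.sInf_nonneg
    rintro v (⟨p, rfl⟩ | ⟨p, rfl⟩) <;> exact walk_sum_nonneg c hc p

lemma restrictDist_nonneg {G : SimpleGraph V} (c : Sym2 V → ℝ)
    (hc : ∀ e ∈ G.edgeSet, 0 ≤ c e) {R : Finset V} (p : Sym2 {v : V // v ∈ R}) :
    0 ≤ restrictDist G c R p := by
  induction p using Sym2.ind with
  | _ x y =>
    rw [restrictDist, Sym2.lift_mk]
    exact wdist_nonneg c hc _

lemma quotCost_nonneg {R : Type*} {d : Sym2 R → ℝ} (hd : ∀ p, 0 ≤ d p)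
    (sd : Setoid R) (e : Sym2 (Quotient sd)) : 0 ≤ quotCost d sd e := by
  apply Real.sInf_nonneg
  rintro v ⟨a, b, -, rfl⟩
  exact hd _

lemma mstCost_nonneg {R : Type*} {u : Sym2 R → ℝ} (hu : ∀ p, 0 ≤ u p) :
    0 ≤ mstCost u := by
  apply Real.sInf_nonneg
  rintro w ⟨T, -, -, -, rfl⟩
  exact Finset.sum_nonneg fun e _ => hu e

/-- Extract a walk nearly achieving the `wdist`. -/
lemma exists_walk_near {G : SimpleGraph V} (hG : G.Connected) (c : Sym2 V → ℝ)
    (x y : V) {ε : ℝ} (hε : 0 < ε) :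
    ∃ p : G.Walk x y, (p.edges.map c).sum < wdist G c s(x, y) + ε := by
  have hne : {d : ℝ | (∃ p : G.Walk x y, d = (p.edges.map c).sum) ∨
      (∃ p : G.Walk y x, d = (p.edges.map c).sum)}.Nonempty := by
    obtain ⟨p⟩ := hG.preconnected x y
    exact ⟨_, Or.inl ⟨p, rfl⟩⟩
  have hlt : sInf {d : ℝ | (∃ p : G.Walk x y, d = (p.edges.map c).sum) ∨
      (∃ p : G.Walk y x, d = (p.edges.map c).sum)} < wdist G c s(x, y) + ε := by
    rw [wdist, Sym2.lift_mk]; linarith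
  obtain ⟨v, hv, hvlt⟩ := exists_lt_of_csInf_lt hne hlt
  rcases hv with ⟨p, rfl⟩ | ⟨p, rfl⟩
  · exact ⟨p, hvlt⟩
  · refine ⟨p.reverse, ?_⟩
    rwa [SimpleGraph.Walk.edges_reverse, List.map_reverse, List.sum_reverse]

/-- A sum over the `toFinset` of a list is at most the sum over the list, for
nonnegative weights. -/
lemma sum_toFinset_le [DecidableEq V] (f : V → ℝ) :
    ∀ (l : List V), (∀ a ∈ l, 0 ≤ f a) → ∑ a ∈ l.toFinset, f a ≤ (l.map f).sum := by
  intro l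
  induction l with
  | nil => simp
  | cons a l ih =>
    intro h
    rw [List.toFinset_cons, List.map_cons, List.sum_cons]
    by_cases ha : a ∈ l.toFinset
    · rw [Finset.insert_eq_self.2 ha]
      have := ih fun b hb => h b (List.mem_cons_of_mem a hb)
      have h0 : 0 ≤ f a := h a List.mem_cons_self
      linarith
    · rw [Finset.sum_insert ha]
      have := ih fun b hb => h b (List.mem_cons_of_mem a hb)
      linarith

lemma sum_union_le [DecidableEq V] (f : V → ℝ) (s t : Finset V)
    (hf : ∀ a ∈ s ∩ t, 0 ≤ f a) :
    ∑ a ∈ s ∪ t, f a ≤ ∑ a ∈ s, f a + ∑ a ∈ t, f a := by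
  have := Finset.sum_union_inter (s₁ := s) (s₂ := t) (f := f)
  have h0 : 0 ≤ ∑ a ∈ s ∩ t, f a := Finset.sum_nonneg hf
  linarith

lemma sum_biUnion_le {ι : Type*} [DecidableEq V] (s : Finset ι) (t : ι → Finset V)
    (f : V → ℝ) (hf : ∀ a ∈ s.biUnion t, 0 ≤ f a) :
    ∑ a ∈ s.biUnion t, f a ≤ ∑ i ∈ s, ∑ a ∈ t i, f a := by
  induction s using Finset.induction with
  | empty => simp
  | insert j s' hx ih =>
    have hsub : s'.biUnion t ⊆ (insert j s').biUnion t :=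
      Finset.biUnion_subset_biUnion_of_subset_left t (Finset.subset_insert j s')
    have h1 : ∑ a ∈ t j ∪ s'.biUnion t, f a ≤ ∑ a ∈ t j, f a + ∑ a ∈ s'.biUnion t, f a := by
      refine sum_union_le f _ _ (fun a ha => hf a ?_)
      rcases Finset.mem_inter.1 ha with ⟨ha1, -⟩
      exact Finset.subset_biUnion_of_mem t (Finset.mem_insert_self j s') ha1
    have h2 := ih (fun a ha => hf a (hsub ha))
    rw [Finset.biUnion_insert, Finset.sum_insert hx]
    linarith

end Aux
section Aux2

open SimpleGraph

/-- The set defining `mstCost` is nonempty for a nonempty fintype (star tree). -/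
lemma mst_set_nonempty {Q : Type*} [Fintype Q] [Nonempty Q] [DecidableEq Q]
    (u : Sym2 Q → ℝ) :
    {w : ℝ | ∃ T : Finset (Sym2 Q), (∀ e ∈ T, ¬ e.IsDiag) ∧
      (SimpleGraph.fromEdgeSet (↑T : Set (Sym2 Q))).Connected ∧
      T.card + 1 = Nat.card Q ∧ w = ∑ e ∈ T, u e}.Nonempty := by
  classical
  obtain ⟨q0⟩ := (inferInstance : Nonempty Q)
  set T : Finset (Sym2 Q) := (Finset.univ.erase q0).image (fun q => s(q0, q)) with hT
  have hmem : ∀ {q : Q}, q ≠ q0 → s(q0, q) ∈ T := by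
    intro q hq
    exact Finset.mem_image.2 ⟨q, Finset.mem_erase.2 ⟨hq, Finset.mem_univ q⟩, rfl⟩
  have hreach : ∀ q : Q, (SimpleGraph.fromEdgeSet (↑T : Set (Sym2 Q))).Reachable q0 q := by
    intro q
    by_cases hq : q = q0
    · subst hq; exact Reachable.refl q
    · exact SimpleGraph.Adj.reachable
        ((SimpleGraph.fromEdgeSet_adj _).2 ⟨hmem hq, fun h => hq h.symm⟩)
  refine ⟨∑ e ∈ T, u e, T, ?_, ?_, ?_, rfl⟩
  · intro e he
    rcases Finset.mem_image.1 he with ⟨q, hq, rfl⟩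
    rw [Sym2.mk_isDiag_iff]
    exact fun h => (Finset.mem_erase.1 hq).1 h.symm
  · exact ⟨fun a b => (hreach a).symm.trans (hreach b)⟩
  · have hinj : Set.InjOn (fun q => s(q0, q)) ↑(Finset.univ.erase q0) := by
      intro a ha b hb h
      rcases Sym2.eq_iff.1 h with ⟨-, h2⟩ | ⟨h1, h2⟩
      · exact h2
      · exact absurd h2 ((Finset.mem_erase.1 (Finset.mem_coe.1 ha)).1)
    rw [hT, Finset.card_image_of_injOn hinj, Finset.card_erase_of_mem (Finset.mem_univ q0),
      Nat.card_eq_fintype_card, ← Finset.card_univ]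
    exact Nat.succ_pred_eq_of_pos (Finset.card_pos.2 ⟨q0, Finset.mem_univ q0⟩)

/-- One-directional inclusion for relabeling `mstCost` along an equivalence. -/
lemma mst_set_subset {A B : Type*} (e : A ≃ B) (u : Sym2 A → ℝ) (u' : Sym2 B → ℝ)
    (h : ∀ p : Sym2 A, u p = u' (p.map e)) :
    {w : ℝ | ∃ T : Finset (Sym2 A), (∀ q ∈ T, ¬ q.IsDiag) ∧
      (SimpleGraph.fromEdgeSet (↑T : Set (Sym2 A))).Connected ∧
      T.card + 1 = Nat.card A ∧ w = ∑ q ∈ T, u q} ⊆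
    {w : ℝ | ∃ T : Finset (Sym2 B), (∀ q ∈ T, ¬ q.IsDiag) ∧
      (SimpleGraph.fromEdgeSet (↑T : Set (Sym2 B))).Connected ∧
      T.card + 1 = Nat.card B ∧ w = ∑ q ∈ T, u' q} := by
  rintro w ⟨T, hdiag, hconn, hcard, rfl⟩
  refine ⟨T.map e.toEmbedding.sym2Map, ?_, ?_, ?_, ?_⟩
  · intro q hq
    rcases Finset.mem_map.1 hq with ⟨p, hp, rfl⟩
    simpa [Function.Embedding.sym2Map, Sym2.isDiag_map e.injective] using hdiag p hp
  · have iso : SimpleGraph.fromEdgeSet (↑T : Set (Sym2 A)) ≃g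
        SimpleGraph.fromEdgeSet (↑(T.map e.toEmbedding.sym2Map) : Set (Sym2 B)) := by
      refine ⟨e, ?_⟩
      intro a b
      simp only [SimpleGraph.fromEdgeSet_adj, Finset.coe_map, Set.mem_image,
        Finset.mem_coe]
      constructor
      · rintro ⟨⟨p, hp, hpe⟩, hne⟩
        have : p = s(a, b) := by
          apply e.toEmbedding.sym2Map.injective
          rw [hpe]
          simp [Function.Embedding.sym2Map, Sym2.map_pair_eq]
        subst this
        exact ⟨hp, fun hab => hne (by rw [hab])⟩
      · rintro ⟨hp, hne⟩
        refine ⟨⟨s(a, b), hp, ?_⟩, fun hab => hne (e.injective hab)⟩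
        simp [Function.Embedding.sym2Map, Sym2.map_pair_eq]
    exact iso.connected_iff.1 hconn
  · rw [Finset.card_map, hcard]
    exact Nat.card_congr e
  · rw [Finset.sum_map]
    refine Finset.sum_congr rfl fun p _ => ?_
    rw [h p]; rfl

lemma mstCost_map_equiv {A B : Type*} (e : A ≃ B) (u : Sym2 A → ℝ) (u' : Sym2 B → ℝ)
    (h : ∀ p : Sym2 A, u p = u' (p.map e)) : mstCost u = mstCost u' := by
  have h' : ∀ p : Sym2 B, u' p = u (p.map e.symm) := by
    intro p
    rw [h (p.map e.symm), Sym2.map_map]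
    rw [show (⇑e ∘ ⇑e.symm) = id from funext fun x => e.apply_symm_apply x, Sym2.map_id, id_eq]
  unfold mstCost
  congr 1
  exact Set.Subset.antisymm (mst_set_subset e u u' h) (mst_set_subset e.symm u' u h')

/-- `mstCost` of the quotient by `⊥` agrees with `mstCost` of the original costs. -/
lemma mstCost_quot_bot {A : Type*} (d : Sym2 A → ℝ) :
    mstCost (quotCost d (⊥ : Setoid A)) = mstCost d := by
  have hbot : ∀ {a b : A}, (⊥ : Setoid A).r a b → a = b := by
    intro a b hab
    exact hab
  let e : Quotient (⊥ : Setoid A) ≃ A :=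
    { toFun := Quotient.lift id fun a b hab => hbot hab
      invFun := Quotient.mk _
      left_inv := by rintro ⟨a⟩; rfl
      right_inv := fun a => rfl }
  refine mstCost_map_equiv e _ d ?_
  intro p
  induction p using Sym2.ind with
  | _ q1 q2 =>
    induction q1 using Quotient.ind with
    | _ a =>
    induction q2 using Quotient.ind with
    | _ b =>
    have he : ∀ x : A, e (Quotient.mk _ x) = x := fun x => rfl
    have hmap : Sym2.map e s(Quotient.mk _ a, Quotient.mk _ b) = s(a, b) := by
      rw [Sym2.map_pair_eq, he, he]
    rw [hmap]
    show quotCost d ⊥ _ = d s(a, b)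
    have hset : {v : ℝ | ∃ a' b' : A,
        s(Quotient.mk ⊥ a', Quotient.mk ⊥ b') = s(Quotient.mk ⊥ a, Quotient.mk ⊥ b) ∧
        v = d s(a', b')} = {d s(a, b)} := by
      ext v
      simp only [Set.mem_setOf_eq, Set.mem_singleton_iff]
      constructor
      · rintro ⟨a', b', hab, rfl⟩
        rcases Sym2.eq_iff.1 hab with ⟨h1, h2⟩ | ⟨h1, h2⟩
        · rw [hbot (Quotient.exact h1), hbot (Quotient.exact h2)]
        · rw [hbot (Quotient.exact h1), hbot (Quotient.exact h2), Sym2.eq_swap]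
      · rintro rfl
        exact ⟨a, b, rfl, rfl⟩
    show sInf _ = d s(a, b)
    rw [hset, csInf_singleton]

end Aux2
section Aux3

open SimpleGraph

lemma conn_le_struct {V : Type*} [Fintype V] [DecidableEq V]
    (G : SimpleGraph V) (hG : G.Connected)
    (c : Sym2 V → ℝ) (hc : ∀ e ∈ G.edgeSet, 0 < c e)
    (R : Finset V) (hR : R.Nonempty)
    (sd : Setoid {v : V // v ∈ R}) (KS : Finset (Sym2 V))
    (hKS : (↑KS : Set (Sym2 V)) ⊆ G.edgeSet)
    (hsd : ∀ a b : {v : V // v ∈ R}, sd.r a b →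
      (SimpleGraph.fromEdgeSet (↑KS : Set (Sym2 V))).Reachable a.val b.val) :
    connCost G c (↑R : Set V) ≤
      mstCost (quotCost (restrictDist G c R) sd) + ∑ e ∈ KS, c e := by
  classical
  have hdnn : ∀ p, 0 ≤ restrictDist G c R p :=
    restrictDist_nonneg c (fun e he => (hc e he).le)
  have hRsub : Nonempty {v : V // v ∈ R} := ⟨⟨hR.choose, hR.choose_spec⟩⟩
  haveI hQ : Nonempty (Quotient sd) := Nonempty.map (Quotient.mk sd) hRsub
  haveI : DecidableEq (Quotient sd) := Classical.decEq _
  haveI : DecidableRel (fun a b : {v : V // v ∈ R} => a ≈ b) :=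
    fun _ _ => Classical.propDecidable _
  haveI : Fintype (Quotient sd) := Quotient.fintype sd
  refine le_of_forall_pos_le_add ?_
  intro ε hε
  have hrep : ∀ q : Sym2 (Quotient sd), ∃ a b : {v : V // v ∈ R},
      s(Quotient.mk sd a, Quotient.mk sd b) = q := by
    intro q
    induction q using Sym2.ind with
    | _ q1 q2 =>
      induction q1 using Quotient.ind with
      | _ a =>
      induction q2 using Quotient.ind with
      | _ b => exact ⟨a, b, rfl⟩
  -- pick a near-optimal spanning tree of the quotient metric
  have hSne := mst_set_nonempty (quotCost (restrictDist G c R) sd)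
  have hMlt : sInf {w : ℝ | ∃ T : Finset (Sym2 (Quotient sd)),
      (∀ e ∈ T, ¬ e.IsDiag) ∧
      (SimpleGraph.fromEdgeSet (↑T : Set (Sym2 (Quotient sd)))).Connected ∧
      T.card + 1 = Nat.card (Quotient sd) ∧
      w = ∑ e ∈ T, quotCost (restrictDist G c R) sd e} <
      mstCost (quotCost (restrictDist G c R) sd) + ε / 3 := by
    rw [mstCost]; linarith
  obtain ⟨w, hwmem, hwlt⟩ := exists_lt_of_csInf_lt hSne hMlt
  obtain ⟨T, hTdiag, hTconn, hTcard, rfl⟩ := hwmem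
  set δ := ε / (3 * (T.card + 1)) with hδ
  have hδpos : 0 < δ := by
    apply div_pos hε
    positivity
  -- choose representatives and near-optimal walks for each tree edge
  have hex : ∀ e : {x // x ∈ T}, ∃ (a b : {v : V // v ∈ R}) (p : G.Walk a.val b.val),
      s(Quotient.mk sd a, Quotient.mk sd b) = e.val ∧
      (p.edges.map c).sum < quotCost (restrictDist G c R) sd e.val + 2 * δ := by
    intro e
    have hune : {v : ℝ | ∃ a b : {v : V // v ∈ R},
        s(Quotient.mk sd a, Quotient.mk sd b) = e.val ∧
        v = restrictDist G c R s(a, b)}.Nonempty := by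
      obtain ⟨a, b, hab⟩ := hrep e.val
      exact ⟨restrictDist G c R s(a, b), a, b, hab, rfl⟩
    have hlt : sInf {v : ℝ | ∃ a b : {v : V // v ∈ R},
        s(Quotient.mk sd a, Quotient.mk sd b) = e.val ∧
        v = restrictDist G c R s(a, b)} <
        quotCost (restrictDist G c R) sd e.val + δ := by
      rw [show quotCost (restrictDist G c R) sd e.val = sInf {v : ℝ | ∃ a b : {v : V // v ∈ R},
        s(Quotient.mk sd a, Quotient.mk sd b) = e.val ∧
        v = restrictDist G c R s(a, b)} from rfl]
      linarith
    obtain ⟨v, ⟨a, b, hab, rfl⟩, hvlt⟩ := exists_lt_of_csInf_lt hune hlt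
    have hwd : restrictDist G c R s(a, b) = wdist G c s(a.val, b.val) := by
      rw [restrictDist, Sym2.lift_mk]
    obtain ⟨p, hp⟩ := exists_walk_near hG c a.val b.val hδpos
    refine ⟨a, b, p, hab, ?_⟩
    rw [← hwd] at hp
    linarith
  choose A B P hmke hsum using hex
  set KU : Finset (Sym2 V) := KS ∪ T.attach.biUnion (fun e => (P e).edges.toFinset)
    with hKU
  have hKUsub : (↑KU : Set (Sym2 V)) ⊆ G.edgeSet := by
    intro x hx
    rcases Finset.mem_union.1 (Finset.mem_coe.1 hx) with h | h
    · exact hKS (Finset.mem_coe.2 h)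
    · rcases Finset.mem_biUnion.1 h with ⟨e, -, he⟩
      exact (P e).edges_subset_edgeSet (List.mem_toFinset.1 he)
  have hmono : SimpleGraph.fromEdgeSet (↑KS : Set (Sym2 V)) ≤
      SimpleGraph.fromEdgeSet (↑KU : Set (Sym2 V)) := by
    apply SimpleGraph.fromEdgeSet_mono
    intro x hx
    exact Finset.mem_coe.2 (Finset.mem_union_left _ (Finset.mem_coe.1 hx))
  have reach : ∀ a b : {v : V // v ∈ R}, sd.r a b →
      (SimpleGraph.fromEdgeSet (↑KU : Set (Sym2 V))).Reachable a.val b.val :=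
    fun a b h => (hsd a b h).mono hmono
  have wreach : ∀ e : {x // x ∈ T},
      (SimpleGraph.fromEdgeSet (↑KU : Set (Sym2 V))).Reachable (A e).val (B e).val := by
    intro e
    refine ⟨(P e).transfer _ ?_⟩
    intro q hq
    rw [SimpleGraph.edgeSet_fromEdgeSet]
    refine ⟨Finset.mem_coe.2 (Finset.mem_union_right _
      (Finset.mem_biUnion.2 ⟨e, Finset.mem_attach _ _, List.mem_toFinset.2 hq⟩)), ?_⟩
    intro hdiag
    have hqe := (P e).edges_subset_edgeSet hq
    induction q using Sym2.ind with
    | _ x y =>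
      have : x ≠ y := (G.mem_edgeSet.1 hqe).ne
      exact this (Sym2.mk_isDiag_iff.1 hdiag)
  have main : ∀ {q q' : Quotient sd}
      (w : (SimpleGraph.fromEdgeSet (↑T : Set (Sym2 (Quotient sd)))).Walk q q'),
      ∀ a b : {v : V // v ∈ R}, Quotient.mk sd a = q → Quotient.mk sd b = q' →
      (SimpleGraph.fromEdgeSet (↑KU : Set (Sym2 V))).Reachable a.val b.val := by
    intro q q' w
    induction w with
    | nil => exact fun a b ha hb => reach a b (Quotient.exact (ha.trans hb.symm))
    | @cons q1 q2 q3 h p ih =>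
      intro a b ha hb
      obtain ⟨hmem', hne⟩ := (SimpleGraph.fromEdgeSet_adj _).1 h
      have hmemT : s(q1, q2) ∈ T := Finset.mem_coe.1 hmem'
      have hmk2 := hmke ⟨s(q1, q2), hmemT⟩
      rcases Sym2.eq_iff.1 hmk2 with ⟨h1, h2⟩ | ⟨h1, h2⟩
      · exact ((reach a _ (Quotient.exact (ha.trans h1.symm))).trans
          (wreach ⟨s(q1, q2), hmemT⟩)).trans (ih _ b h2 hb)
      · exact ((reach a _ (Quotient.exact (ha.trans h2.symm))).trans
          (wreach ⟨s(q1, q2), hmemT⟩).symm).trans (ih _ b h1 hb)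
  have hconnR : ConnectsSet (↑KU : Set (Sym2 V)) (↑R : Set V) := by
    intro x hx y hy
    obtain ⟨w⟩ := hTconn.preconnected (Quotient.mk sd ⟨x, hx⟩) (Quotient.mk sd ⟨y, hy⟩)
    exact main w ⟨x, hx⟩ ⟨y, hy⟩ rfl rfl
  -- cost bound
  have hnn : ∀ e ∈ KU, 0 ≤ c e := fun e he => (hc e (hKUsub (Finset.mem_coe.2 he))).le
  have hcost1 : ∑ e ∈ KU, c e ≤ ∑ e ∈ KS, c e +
      ∑ e ∈ T.attach.biUnion (fun e => (P e).edges.toFinset), c e := by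
    apply sum_union_le
    intro a ha
    exact hnn a (Finset.mem_union_left _ (Finset.mem_inter.1 ha).1)
  have hcost2 : ∑ e ∈ T.attach.biUnion (fun e => (P e).edges.toFinset), c e ≤
      ∑ e ∈ T.attach, ∑ x ∈ (P e).edges.toFinset, c x := by
    apply sum_biUnion_le
    intro a ha
    exact hnn a (Finset.mem_union_right _ ha)
  have hcost3 : ∑ e ∈ T.attach, ∑ x ∈ (P e).edges.toFinset, c x ≤
      ∑ e ∈ T, quotCost (restrictDist G c R) sd e + T.card * (2 * δ) := by
    have step : ∀ e ∈ T.attach, ∑ x ∈ (P e).edges.toFinset, c x ≤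
        quotCost (restrictDist G c R) sd e.val + 2 * δ := by
      intro e _
      calc ∑ x ∈ (P e).edges.toFinset, c x ≤ ((P e).edges.map c).sum :=
            sum_toFinset_le c _ (fun a ha => (hc a ((P e).edges_subset_edgeSet ha)).le)
        _ ≤ _ := (hsum e).le
    calc ∑ e ∈ T.attach, ∑ x ∈ (P e).edges.toFinset, c x ≤
        ∑ e ∈ T.attach, (quotCost (restrictDist G c R) sd e.val + 2 * δ) :=
          Finset.sum_le_sum step
      _ = ∑ e ∈ T, quotCost (restrictDist G c R) sd e + T.card * (2 * δ) := by
          rw [Finset.sum_add_distrib, Finset.sum_attach, Finset.sum_const,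
            Finset.card_attach, nsmul_eq_mul]
  have hδtot : (T.card : ℝ) * (2 * δ) ≤ 2 * ε / 3 := by
    have h1 : ((T.card : ℝ) + 1) * δ = ε / 3 := by
      rw [hδ]
      field_simp
    nlinarith [hδpos.le]
  have hbdd : BddBelow {w : ℝ | ∃ K : Finset (Sym2 V),
      (↑K : Set (Sym2 V)) ⊆ G.edgeSet ∧ ConnectsSet (↑K : Set (Sym2 V)) (↑R : Set V) ∧
      w = ∑ e ∈ K, c e} := by
    refine ⟨0, ?_⟩
    rintro w ⟨K, hKsub, -, rfl⟩
    exact Finset.sum_nonneg fun e he => (hc e (hKsub (Finset.mem_coe.2 he))).le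
  have hle : connCost G c (↑R : Set V) ≤ ∑ e ∈ KU, c e := by
    rw [connCost]
    exact csInf_le hbdd ⟨KU, hKUsub, hconnR, rfl⟩
  linarith
end Aux3
section Aux4

open MeasureTheory intervalIntegral

lemma integral_step {t C : ℝ} (ht0 : 0 < t) (ht : t ≤ 1/2) (hC : 0 ≤ C) :
    ∫ γ in (0:ℝ)..(1/2), (if γ < t then C else 0) = t * C := by
  set g : ℝ → ℝ := fun γ => if γ < t then C else 0 with hg
  have hanti : Antitone g := by
    intro x y hxy
    by_cases hy : y < t
    · rw [hg]; simp only
      rw [if_pos hy, if_pos (lt_of_le_of_lt hxy hy)]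
    · rw [hg]; simp only
      rw [if_neg hy]
      split_ifs <;> simp [hC]
  have hInt : ∀ a b : ℝ, IntervalIntegrable g volume a b := fun a b =>
    hanti.intervalIntegrable
  have h1 : ∫ γ in (0:ℝ)..t, g γ = t * C := by
    have hae : ∀ᵐ x : ℝ, x ∈ Set.uIoc (0:ℝ) t → g x = C := by
      have hsing : ∀ᵐ x : ℝ, x ∉ ({t} : Set ℝ) :=
        (MeasureTheory.measure_eq_zero_iff_ae_notMem).1 (measure_singleton t)
      filter_upwards [hsing] with x hx hxm
      rw [Set.uIoc_of_le ht0.le] at hxm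
      have hxt : x < t := lt_of_le_of_ne hxm.2 (by simpa using hx)
      rw [hg]; simp only; rw [if_pos hxt]
    rw [intervalIntegral.integral_congr_ae hae, intervalIntegral.integral_const,
      smul_eq_mul, sub_zero]
  have h2 : ∫ γ in t..(1/2:ℝ), g γ = 0 := by
    have hae : ∀ᵐ x : ℝ, x ∈ Set.uIoc t (1/2:ℝ) → g x = 0 := by
      refine Filter.Eventually.of_forall ?_
      intro x hxm
      rw [Set.uIoc_of_le ht] at hxm
      rw [hg]; simp only
      rw [if_neg (not_lt.2 hxm.1.le)]
    rw [intervalIntegral.integral_congr_ae hae, intervalIntegral.integral_zero]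
  have := intervalIntegral.integral_add_adjacent_intervals (hInt 0 t) (hInt t (1/2))
  rw [h1, h2] at this
  rw [← this]
  ring

lemma abstract_final (TM L : ℝ) (j : ℕ) (r dr : Fin j → ℝ)
    (hTMnn : 0 ≤ TM) (hdr : ∀ i, 0 < dr i) (hub : ∀ i, r i < 1) (hlb : ∀ i, 1/2 ≤ r i)
    (hL : L ≤ TM - ∑ i, (1 - r i) * dr i) :
    L ≤ TM * (1 - ∫ γ in (0:ℝ)..(1/2),
      (∑ i ∈ Finset.univ.filter (fun i => r i < 1 - γ), dr i) / TM) := by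
  classical
  have hint : (∫ γ in (0:ℝ)..(1/2),
      (∑ i ∈ Finset.univ.filter (fun i => r i < 1 - γ), dr i) / TM) =
      ∑ i : Fin j, (1 - r i) * (dr i / TM) := by
    have heq : ∀ γ ∈ Set.uIcc (0:ℝ) (1/2),
        (∑ i ∈ Finset.univ.filter (fun i => r i < 1 - γ), dr i) / TM =
        ∑ i : Fin j, (if γ < 1 - r i then dr i / TM else 0) := by
      intro γ _
      rw [Finset.sum_filter, Finset.sum_div]
      refine Finset.sum_congr rfl fun i _ => ?_
      have hiff : (r i < 1 - γ) ↔ (γ < 1 - r i) := lt_sub_comm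
      rw [if_congr hiff rfl rfl]
      split_ifs with h
      · rfl
      · exact zero_div TM
    rw [intervalIntegral.integral_congr heq]
    rw [intervalIntegral.integral_finset_sum (fun i _ => ?_)]
    · refine Finset.sum_congr rfl fun i _ => ?_
      exact integral_step (by linarith [hub i]) (by linarith [hlb i])
        (div_nonneg (hdr i).le hTMnn)
    · -- integrability
      have hanti : Antitone (fun γ : ℝ => if γ < 1 - r i then dr i / TM else 0) := by
        intro x y hxy
        simp only
        by_cases hy : y < 1 - r i
        · rw [if_pos hy, if_pos (lt_of_le_of_lt hxy hy)]
        · rw [if_neg hy]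
          split_ifs <;> simp [div_nonneg (hdr i).le hTMnn]
      exact hanti.intervalIntegrable
  rw [hint]
  by_cases hTM : TM = 0
  · have hz : ∀ i : Fin j, (1 - r i) * (dr i / TM) = 0 := by
      intro i; rw [hTM, div_zero, mul_zero]
    rw [Finset.sum_congr rfl (fun i _ => hz i), Finset.sum_const_zero, hTM]
    have hsum : 0 ≤ ∑ i : Fin j, (1 - r i) * dr i :=
      Finset.sum_nonneg fun i _ => mul_nonneg (by linarith [hub i]) (hdr i).le
    rw [hTM] at hL
    linarith
  · have : TM * (1 - ∑ i : Fin j, (1 - r i) * (dr i / TM)) =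
        TM - ∑ i : Fin j, (1 - r i) * dr i := by
      rw [mul_sub, mul_one, Finset.mul_sum]
      congr 1
      refine Finset.sum_congr rfl fun i _ => ?_
      field_simp
    rw [this]
    exact hL

end Aux4

/-- In the relative greedy analysis,
`OPT ≤ TMST · (1 - ∫_0^{1/2} ρ(γ) dγ)`, where
`ρ(γ) = (1/TMST) · Σ_{i ≤ j(γ)} drop_{G_i}(X_i)` and `j(γ)` is the last index with
ratio `< 1 - γ` (equivalently, since the ratios are non-decreasing, the sum extends over
all `i` with `c(K_i)/drop_{G_i}(X_i) < 1 - γ`), and `OPT` is the cost of an optimal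
Steiner tree. -/
theorem greedy_opt_bound {V : Type*} [Fintype V] [DecidableEq V]
    (G : SimpleGraph V) (hG : G.Connected)
    (c : Sym2 V → ℝ) (hc : ∀ e ∈ G.edgeSet, 0 < c e)
    (R : Finset V) (hR : R.Nonempty)
    (j : ℕ)
    (X : Fin j → Set {v : V // v ∈ R}) (K : Fin j → Finset (Sym2 V))
    (sd : Fin (j + 1) → Setoid {v : V // v ∈ R})
    (hs0 : sd 0 = ⊥)
    (hsucc : ∀ i : Fin j, sd i.succ = sd i.castSucc ⊔ contractSetoid (X i))
    (hKE : ∀ i : Fin j, (↑(K i) : Set (Sym2 V)) ⊆ G.edgeSet)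
    (hconn : ∀ i : Fin j, ConnectsSet (↑(K i) : Set (Sym2 V)) (Subtype.val '' X i))
    (hdpos : ∀ i : Fin j, 0 < stageDrop G c R (sd i.castSucc) (X i))
    (hlb : ∀ i : Fin j, 1 / 2 ≤ stageRatio G c R (sd i.castSucc) (K i) (X i))
    (hub : ∀ i : Fin j, stageRatio G c R (sd i.castSucc) (K i) (X i) < 1)
    (hmono : ∀ i i' : Fin j, i ≤ i' →
      stageRatio G c R (sd i.castSucc) (K i) (X i) ≤
        stageRatio G c R (sd i'.castSucc) (K i') (X i')) :
    connCost G c (↑R : Set V) ≤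
      mstCost (restrictDist G c R) *
        (1 - ∫ γ in (0 : ℝ)..(1 / 2),
          (∑ i ∈ Finset.univ.filter
              (fun i : Fin j => stageRatio G c R (sd i.castSucc) (K i) (X i) < 1 - γ),
            stageDrop G c R (sd i.castSucc) (X i)) / mstCost (restrictDist G c R)) := by
  classical
  have hdnn : ∀ p, 0 ≤ restrictDist G c R p :=
    restrictDist_nonneg c (fun e he => (hc e he).le)
  have hTMnn : 0 ≤ mstCost (restrictDist G c R) := mstCost_nonneg hdnn
  set KU0 : Finset (Sym2 V) := Finset.univ.biUnion (fun i : Fin j => K i) with hKU0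
  have hKU0sub : (↑KU0 : Set (Sym2 V)) ⊆ G.edgeSet := by
    intro x hx
    rcases Finset.mem_biUnion.1 (Finset.mem_coe.1 hx) with ⟨i, -, hi⟩
    exact hKE i (Finset.mem_coe.2 hi)
  let RS : Setoid {v : V // v ∈ R} :=
    ⟨fun a b => (SimpleGraph.fromEdgeSet (↑KU0 : Set (Sym2 V))).Reachable a.val b.val,
      ⟨fun a => SimpleGraph.Reachable.refl _, fun h => h.symm, fun h1 h2 => h1.trans h2⟩⟩
  have hclaim : ∀ i : Fin (j + 1), sd i ≤ RS := by
    intro i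
    induction i using Fin.induction with
    | zero => rw [hs0]; exact bot_le
    | succ i ih =>
      rw [hsucc i]
      refine sup_le ih ?_
      rw [Setoid.le_def]
      intro a b hab
      have hab' : a = b ∨ (a ∈ X i ∧ b ∈ X i) := hab
      rcases hab' with rfl | ⟨ha, hb⟩
      · exact SimpleGraph.Reachable.refl _
      · have hre := hconn i a.val ⟨a, ha, rfl⟩ b.val ⟨b, hb, rfl⟩
        exact hre.mono (SimpleGraph.fromEdgeSet_mono (by
          intro x hx
          exact Finset.mem_coe.2 ((Finset.subset_biUnion_of_mem (fun i : Fin j => K i)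
            (Finset.mem_univ i)) (Finset.mem_coe.1 hx))))
  have hstruct := conn_le_struct G hG c hc R hR (sd (Fin.last j)) KU0 hKU0sub
    (fun a b h => Setoid.le_def.1 (hclaim (Fin.last j)) h)
  -- telescoping
  set F : ℕ → ℝ := fun n => if hn : n < j + 1 then
    mstCost (quotCost (restrictDist G c R) (sd ⟨n, hn⟩)) else 0 with hF
  have hstep : ∀ i : Fin j,
      stageDrop G c R (sd i.castSucc) (X i) = F i.val - F (i.val + 1) := by
    intro i
    have hi1 : i.val < j + 1 := by omega
    have hi2 : i.val + 1 < j + 1 := by omega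
    have h1 : (⟨i.val, hi1⟩ : Fin (j+1)) = i.castSucc := by apply Fin.ext; rfl
    have h2 : (⟨i.val + 1, hi2⟩ : Fin (j+1)) = i.succ := by apply Fin.ext; rfl
    simp only [hF]
    rw [dif_pos hi1, dif_pos hi2, h1, h2, hsucc i]
    rfl
  have htel : ∑ i : Fin j, stageDrop G c R (sd i.castSucc) (X i) = F 0 - F j := by
    rw [Finset.sum_congr rfl (fun i (_ : i ∈ Finset.univ) => hstep i)]
    calc ∑ i : Fin j, (F i.val - F (i.val + 1))
        = ∑ n ∈ Finset.range j, (F n - F (n + 1)) :=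
          Fin.sum_univ_eq_sum_range (fun n => F n - F (n+1)) j
      _ = F 0 - F j := Finset.sum_range_sub' F j
  have hF0 : F 0 = mstCost (restrictDist G c R) := by
    simp only [hF]
    rw [dif_pos (Nat.succ_pos j)]
    have h0 : (⟨0, Nat.succ_pos j⟩ : Fin (j+1)) = 0 := rfl
    rw [h0, hs0, mstCost_quot_bot]
  have hFj : F j = mstCost (quotCost (restrictDist G c R) (sd (Fin.last j))) := by
    simp only [hF]
    rw [dif_pos (Nat.lt_succ_self j)]
    rfl
  have hKsum : ∀ i : Fin j, ∑ e ∈ K i, c e =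
      stageRatio G c R (sd i.castSucc) (K i) (X i) *
        stageDrop G c R (sd i.castSucc) (X i) := by
    intro i
    rw [stageRatio, div_mul_cancel₀]
    exact (hdpos i).ne'
  have hsumK : ∑ e ∈ KU0, c e ≤ ∑ i : Fin j, ∑ e ∈ K i, c e := by
    apply sum_biUnion_le
    intro a ha
    exact (hc a (hKU0sub (Finset.mem_coe.2 ha))).le
  have hL : connCost G c (↑R : Set V) ≤ mstCost (restrictDist G c R) -
      ∑ i : Fin j, (1 - stageRatio G c R (sd i.castSucc) (K i) (X i)) *
        stageDrop G c R (sd i.castSucc) (X i) := by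
    have hsplit : ∑ i : Fin j, (1 - stageRatio G c R (sd i.castSucc) (K i) (X i)) *
        stageDrop G c R (sd i.castSucc) (X i) =
        ∑ i : Fin j, stageDrop G c R (sd i.castSucc) (X i) -
        ∑ i : Fin j, stageRatio G c R (sd i.castSucc) (K i) (X i) *
          stageDrop G c R (sd i.castSucc) (X i) := by
      rw [← Finset.sum_sub_distrib]
      exact Finset.sum_congr rfl fun i _ => by ring
    have hrsum : ∑ i : Fin j, ∑ e ∈ K i, c e =
        ∑ i : Fin j, stageRatio G c R (sd i.castSucc) (K i) (X i) *
          stageDrop G c R (sd i.castSucc) (X i) :=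
      Finset.sum_congr rfl fun i _ => hKsum i
    have hlast : mstCost (quotCost (restrictDist G c R) (sd (Fin.last j))) =
        mstCost (restrictDist G c R) -
        ∑ i : Fin j, stageDrop G c R (sd i.castSucc) (X i) := by
      rw [← hFj, ← hF0]; linarith [htel]
    linarith [hstruct, hsumK]
  exact abstract_final (mstCost (restrictDist G c R)) _ j
    (fun i => stageRatio G c R (sd i.castSucc) (K i) (X i))
    (fun i => stageDrop G c R (sd i.castSucc) (X i))
    hTMnn hdpos hub hlb hL
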